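/- arXiv:1811.11333 — 4 statements merged into one kernel-verified Lean document; each statement's English description precedes it below -/
import Mathlib

section
/- A functor F : C → D is both an isofibration and an equivalence of categories if and only if it has the right lifting property with respect to the three boundary functors ∂₀ : ∅ → [0], ∂₁ : ∂[1] → [1], and ∂₂ : ∂[2] → [2]. -/
open CategoryTheory

/-- A functor `F : C ⥤ D` is an *isofibration* if every isomorphism in `D` with source
`F(c)` lifts to an isomorphism in `C` with source `c`. -/
def CategoryTheory.Functor.Isofib {C D : Type*} [Category C] [Category D] (F : C ⥤ D) : Prop :=
  ∀ (c : C) (d : D) (v : F.obj c ≅ d), ∃ (c' : C) (u : c ≅ c') (h : F.obj c' = d),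
    F.map u.hom = v.hom ≫ eqToHom h.symm

/-- The boundary functor `∂₀ : ∅ → [0]`. -/
def boundaryZero : Discrete PEmpty.{1} ⥤ Discrete PUnit := Functor.empty _

/-- The boundary functor `∂₁ : ∂[1] → [1]`, the identity on objects, from the discrete
category `{0, 1}` to the arrow category `0 → 1` (here `Fin 2` with its order category
structure). -/
def boundaryOne : Discrete (Fin 2) ⥤ Fin 2 := Discrete.functor (fun i => i)

/-- The generating edges of the category `∂[2]`: arrows `f₀₁ : 0 → 1`, `f₁₂ : 1 → 2` and an
extra arrow `f₀₂ : 0 → 2`. -/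
inductive BoundaryTwoEdge : Fin 3 → Fin 3 → Type
  | f01 : BoundaryTwoEdge 0 1
  | f12 : BoundaryTwoEdge 1 2
  | f02 : BoundaryTwoEdge 0 2

/-- The underlying quiver of `∂[2]`. -/
def BQuiv : Type := Fin 3

instance : Quiver BQuiv := ⟨BoundaryTwoEdge⟩

/-- `∂[2]` is the free category on the quiver with arrows `f₀₁, f₁₂, f₀₂`; it has exactly two
arrows `0 → 2`, namely `f₀₂` and the composite `f₁₂ ∘ f₀₁`. -/
abbrev BoundaryTwo : Type := Paths BQuiv

/-- The boundary functor `∂₂ : ∂[2] → [2]`, the identity on objects, sending both `f₀₂` and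
`f₁₂ ∘ f₀₁` to the composite `0 → 2` in `[2]` (here `Fin 3` with its order category). -/
def boundaryTwo : BoundaryTwo ⥤ Fin 3 :=
  Paths.lift
    { obj := fun i => i
      map := fun e =>
        match e with
        | .f01 => homOfLE (by decide)
        | .f12 => homOfLE (by decide)
        | .f02 => homOfLE (by decide) }

lemma preorderFunctor_ext {P : Type*} [Preorder P] {X : Type*} [Category X]
    {G H : P ⥤ X} (hobj : ∀ i, G.obj i = H.obj i)
    (hmap : ∀ (i j : P) (h : i ≤ j),
      G.map (homOfLE h) = eqToHom (hobj i) ≫ H.map (homOfLE h) ≫ eqToHom (hobj j).symm) :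
    G = H :=
  CategoryTheory.Functor.ext hobj (fun i j f => hmap i j (leOfHom f))

lemma discreteFunctor_ext {J : Type*} {X : Type*} [Category X]
    {G H : Discrete J ⥤ X} (hobj : ∀ j : J, G.obj ⟨j⟩ = H.obj ⟨j⟩) :
    G = H := by
  refine CategoryTheory.Functor.ext (fun j => hobj j.as) ?_
  rintro ⟨i⟩ ⟨j⟩ f
  obtain rfl : i = j := f.1.1
  obtain rfl : f = 𝟙 _ := Subsingleton.elim _ _
  simp

section Helpers

variable {C D : Type} [SmallCategory C] [SmallCategory D] (F : C ⥤ D)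

/-- arrows of `BQuiv` as paths -/
abbrev bq (i : Fin 3) : BoundaryTwo := i
abbrev p01 : (bq 0) ⟶ (bq 1) :=
  Quiver.Hom.toPath BoundaryTwoEdge.f01
abbrev p12 : (bq 1) ⟶ (bq 2) :=
  Quiver.Hom.toPath BoundaryTwoEdge.f12
abbrev p02 : (bq 0) ⟶ (bq 2) :=
  Quiver.Hom.toPath BoundaryTwoEdge.f02

example : boundaryTwo.map p01 = homOfLE (by decide) := by
  exact Subsingleton.elim _ _

end Helpers

/-- auxiliary functor for the faithfulness argument -/
def faithTop {C : Type} [SmallCategory C] {c₀ c₁ : C} (a b : c₀ ⟶ c₁) : BoundaryTwo ⥤ C :=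
  Paths.lift
    { obj := ![c₀, c₁, c₁]
      map := fun {i j} e =>
        match e with
        | .f01 => a
        | .f12 => 𝟙 c₁
        | .f02 => b }

lemma faithTop_map01 {C : Type} [SmallCategory C] {c₀ c₁ : C} (a b : c₀ ⟶ c₁) :
    (faithTop a b).map p01 = a := Paths.lift_toPath _ _

lemma faithTop_map12 {C : Type} [SmallCategory C] {c₀ c₁ : C} (a b : c₀ ⟶ c₁) :
    (faithTop a b).map p12 = 𝟙 c₁ := Paths.lift_toPath _ _

lemma faithTop_map02 {C : Type} [SmallCategory C] {c₀ c₁ : C} (a b : c₀ ⟶ c₁) :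
    (faithTop a b).map p02 = b := Paths.lift_toPath _ _


/-- A functor between small categories is both an isofibration and an equivalence of
categories if and only if it has the right lifting property with respect to the three
boundary functors `∂₀ : ∅ → [0]`, `∂₁ : ∂[1] → [1]` and `∂₂ : ∂[2] → [2]`. -/
theorem isofibration_and_equivalence_iff_rlp_boundaries
    {C D : Type} [SmallCategory C] [SmallCategory D] (F : C ⥤ D) :
    (F.Isofib ∧ F.IsEquivalence) ↔
      (@HasLiftingProperty Cat.{0,0} _ (Cat.of (Discrete PEmpty.{1})) (Cat.of (Discrete PUnit))
          (Cat.of C) (Cat.of D) boundaryZero.toCatHom F.toCatHom ∧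
        @HasLiftingProperty Cat.{0,0} _ (Cat.of (Discrete (Fin 2))) (Cat.of (Fin 2))
          (Cat.of C) (Cat.of D) boundaryOne.toCatHom F.toCatHom ∧
        @HasLiftingProperty Cat.{0,0} _ (Cat.of BoundaryTwo) (Cat.of (Fin 3))
          (Cat.of C) (Cat.of D) boundaryTwo.toCatHom F.toCatHom) := by
  constructor
  · rintro ⟨hfib, hequiv⟩
    haveI := hequiv
    have hsurj : Function.Surjective F.obj := by
      intro d
      obtain ⟨c', u, h, -⟩ := hfib (F.objPreimage d) d (F.objObjPreimageIso d)
      exact ⟨c', h⟩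
    refine ⟨⟨fun {f g} sq => ?_⟩, ⟨fun {f g} sq => ?_⟩, ⟨fun {f g} sq => ?_⟩⟩
    · -- ∂₀
      obtain ⟨c, hc⟩ := hsurj (g.toFunctor.obj ⟨PUnit.unit⟩)
      refine ⟨⟨⟨Functor.toCatHom (show Discrete PUnit ⥤ C from (Functor.const _).obj c), ?_, ?_⟩⟩⟩
      · refine Cat.Hom.ext ?_; refine CategoryTheory.Functor.ext ?_ ?_ <;> rintro ⟨⟨⟩⟩
      · exact Cat.Hom.ext (discreteFunctor_ext (fun u => by cases u; exact hc))
    · -- ∂₁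
      obtain ⟨g, rfl⟩ : ∃ g' : Fin 2 ⥤ D, g'.toCatHom = g := ⟨g.toFunctor, rfl⟩
      obtain ⟨f, rfl⟩ : ∃ f' : Discrete (Fin 2) ⥤ C, f'.toCatHom = f := ⟨f.toFunctor, rfl⟩
      have w : f ⋙ F = boundaryOne ⋙ g := congrArg Cat.Hom.toFunctor sq.w
      have h0 : F.obj (f.obj ⟨0⟩) = g.obj (0 : Fin 2) := Functor.congr_obj w ⟨0⟩
      have h1 : F.obj (f.obj ⟨1⟩) = g.obj (1 : Fin 2) := Functor.congr_obj w ⟨1⟩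
      obtain ⟨φ, hφ⟩ := F.map_surjective
        (eqToHom h0 ≫ g.map (homOfLE (show (0 : Fin 2) ≤ 1 by decide)) ≫ eqToHom h1.symm)
      refine ⟨⟨⟨Functor.toCatHom (show Fin 2 ⥤ C from ComposableArrows.mk₁ φ), ?_, ?_⟩⟩⟩
      · refine Cat.Hom.ext (discreteFunctor_ext (fun i => ?_))
        fin_cases i <;> rfl
      · have : ComposableArrows.mk₁ φ ⋙ F = g := by
          refine preorderFunctor_ext (fun i => ?_) (fun i j h => ?_)
          · fin_cases i
            exacts [h0, h1]
          · fin_cases i <;> fin_cases j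
            · show F.map (𝟙 _) = _
              simp
            · exact hφ
            · exact absurd h (by decide)
            · show F.map (𝟙 _) = _
              simp
        exact Cat.Hom.ext this
    · -- ∂₂
      obtain ⟨g, rfl⟩ : ∃ g' : Fin 3 ⥤ D, g'.toCatHom = g := ⟨g.toFunctor, rfl⟩
      obtain ⟨f, rfl⟩ : ∃ f' : BoundaryTwo ⥤ C, f'.toCatHom = f := ⟨f.toFunctor, rfl⟩
      have w : f ⋙ F = boundaryTwo ⋙ g := congrArg Cat.Hom.toFunctor sq.w
      have b01 : boundaryTwo.map p01 = homOfLE (by decide) := Subsingleton.elim _ _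
      have b12 : boundaryTwo.map p12 = homOfLE (by decide) := Subsingleton.elim _ _
      have b02 : boundaryTwo.map p02 = homOfLE (by decide) := Subsingleton.elim _ _
      have e01 := Functor.congr_hom w p01
      have e12 := Functor.congr_hom w p12
      have e02 := Functor.congr_hom w p02
      simp only [Functor.comp_map, b01, b12, b02] at e01 e12 e02
      set u := f.map p01 with hu
      set v := f.map p12 with hv
      set wm := f.map p02 with hw
      have hcomp : wm = u ≫ v := by
        apply F.map_injective
        rw [F.map_comp, e01, e12, e02]
        simp only [Category.assoc, eqToHom_trans_assoc, eqToHom_refl, Category.id_comp]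
        rw [← Functor.map_comp_assoc]
        congr 2
      refine ⟨⟨⟨Functor.toCatHom (show Fin 3 ⥤ C from ComposableArrows.mk₂ u v), ?_, ?_⟩⟩⟩
      · -- boundaryTwo ⋙ mk₂ u v = f
        have : boundaryTwo ⋙ (ComposableArrows.mk₂ u v : Fin 3 ⥤ C) = f := by
          refine Paths.ext_functor ?_ ?_
          · funext a
            exact (show ∀ b : Fin 3, (boundaryTwo ⋙ ComposableArrows.mk₂ u v).obj b = f.obj b by
              intro b; fin_cases b <;> rfl) a
          · intro a b e
            change BoundaryTwoEdge a b at e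
            cases e
            · rw [conj_eqToHom_iff_heq]
              refine heq_of_eq ?_
              show (ComposableArrows.mk₂ u v).map (boundaryTwo.map p01) = u
              rw [b01]; rfl
              rfl
            · rw [conj_eqToHom_iff_heq]
              refine heq_of_eq ?_
              show (ComposableArrows.mk₂ u v).map (boundaryTwo.map p12) = v
              rw [b12]; rfl
              rfl
            · rw [conj_eqToHom_iff_heq]
              refine heq_of_eq ?_
              show (ComposableArrows.mk₂ u v).map (boundaryTwo.map p02) = wm
              rw [b02, hcomp]; rfl
              rfl
        exact Cat.Hom.ext this
      · -- mk₂ u v ⋙ F = g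
        have : ComposableArrows.mk₂ u v ⋙ F = g := by
          have ho : ∀ i : Fin 3, F.obj ((ComposableArrows.mk₂ u v).obj i) = g.obj i := by
            intro i
            fin_cases i
            · exact Functor.congr_obj w (show BoundaryTwo from (0 : Fin 3))
            · exact Functor.congr_obj w (show BoundaryTwo from (1 : Fin 3))
            · exact Functor.congr_obj w (show BoundaryTwo from (2 : Fin 3))
          refine preorderFunctor_ext ho (fun i j h => ?_)
          fin_cases i <;> fin_cases j
          · show F.map (𝟙 _) = _; rw [Subsingleton.elim (homOfLE h) (𝟙 _)]; simp
          · show F.map u = _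
            rw [e01]; rfl
          · show F.map (u ≫ v) = _
            rw [← hcomp, e02]; rfl
          · exact absurd h (by decide)
          · show F.map (𝟙 _) = _; rw [Subsingleton.elim (homOfLE h) (𝟙 _)]; simp
          · show F.map v = _
            rw [e12]; rfl
          · exact absurd h (by decide)
          · exact absurd h (by decide)
          · show F.map (𝟙 _) = _; rw [Subsingleton.elim (homOfLE h) (𝟙 _)]; simp
        exact Cat.Hom.ext this
  · rintro ⟨rlp0, rlp1, rlp2⟩
    -- surjectivity on objects
    have hsurj : Function.Surjective F.obj := by
      intro d
      have sq : CommSq (show Cat.of (Discrete PEmpty.{1}) ⟶ Cat.of C from (Functor.empty C).toCatHom)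
          (show Cat.of (Discrete PEmpty.{1}) ⟶ Cat.of (Discrete PUnit) from boundaryZero.toCatHom)
          (show Cat.of C ⟶ Cat.of D from F.toCatHom)
          (show Cat.of (Discrete PUnit) ⟶ Cat.of D from Functor.toCatHom ((Functor.const _).obj d)) :=
        ⟨by refine Cat.Hom.ext ?_; refine CategoryTheory.Functor.ext ?_ ?_ <;> rintro ⟨⟨⟩⟩⟩
      obtain ⟨⟨l, hl1, hl2⟩⟩ := (rlp0.sq_hasLift sq).exists_lift
      exact ⟨l.toFunctor.obj ⟨PUnit.unit⟩, Functor.congr_obj (congrArg Cat.Hom.toFunctor hl2) ⟨PUnit.unit⟩⟩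
    -- fullness
    have hfull : F.Full := by
      refine ⟨fun {c₀ c₁} k => ?_⟩
      have sq : CommSq
          (show Cat.of (Discrete (Fin 2)) ⟶ Cat.of C from Functor.toCatHom (Discrete.functor ![c₀, c₁]))
          (show Cat.of (Discrete (Fin 2)) ⟶ Cat.of (Fin 2) from boundaryOne.toCatHom)
          (show Cat.of C ⟶ Cat.of D from F.toCatHom)
          (show Cat.of (Fin 2) ⟶ Cat.of D from Functor.toCatHom (ComposableArrows.mk₁ k)) := by
        constructor
        have : (Discrete.functor ![c₀, c₁] ⋙ F : Discrete (Fin 2) ⥤ D) =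
            boundaryOne ⋙ (ComposableArrows.mk₁ k : Fin 2 ⥤ D) := by
          refine discreteFunctor_ext (fun i => ?_)
          fin_cases i <;> rfl
        exact Cat.Hom.ext this
      obtain ⟨⟨l, hl1, hl2⟩⟩ := (rlp1.sq_hasLift sq).exists_lift
      obtain ⟨l, rfl⟩ : ∃ l' : Fin 2 ⥤ C, l'.toCatHom = l := ⟨l.toFunctor, rfl⟩
      have hl1' : boundaryOne ⋙ l = Discrete.functor ![c₀, c₁] := congrArg Cat.Hom.toFunctor hl1
      have hl2' : l ⋙ F = (ComposableArrows.mk₁ k : Fin 2 ⥤ D) := congrArg Cat.Hom.toFunctor hl2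
      have h0 : l.obj (0 : Fin 2) = c₀ := Functor.congr_obj hl1' ⟨0⟩
      have h1 : l.obj (1 : Fin 2) = c₁ := Functor.congr_obj hl1' ⟨1⟩
      have hm := Functor.congr_hom hl2' (homOfLE (show (0:Fin 2) ≤ 1 by decide))
      refine ⟨eqToHom h0.symm ≫ l.map (homOfLE (by decide)) ≫ eqToHom h1, ?_⟩
      have e0 : F.obj (l.obj 0) = F.obj c₀ := by rw [h0]
      have e1 : F.obj (l.obj 1) = F.obj c₁ := by rw [h1]
      rw [F.map_comp, F.map_comp, eqToHom_map, eqToHom_map]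
      simp only [Functor.comp_map] at hm
      rw [hm]
      have : (ComposableArrows.mk₁ k).map (homOfLE (show (0:Fin 2) ≤ 1 by decide)) = k := rfl
      change eqToHom (_ : F.obj c₀ = F.obj (l.obj 0)) ≫ (eqToHom (_ : F.obj (l.obj 0) = F.obj c₀) ≫
        k ≫ eqToHom (_ : F.obj c₁ = F.obj (l.obj 1))) ≫ eqToHom (_ : F.obj (l.obj 1) = F.obj c₁) = k
      simp only [Category.assoc]
      erw [eqToHom_trans_assoc, eqToHom_refl, Category.id_comp, eqToHom_trans, eqToHom_refl, Category.comp_id]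
    -- faithfulness
    have hfaithful : F.Faithful := by
      refine ⟨fun {c₀ c₁} {a b} hab => ?_⟩
      have b01 : boundaryTwo.map p01 = homOfLE (by decide) := Subsingleton.elim _ _
      have b12 : boundaryTwo.map p12 = homOfLE (by decide) := Subsingleton.elim _ _
      have b02 : boundaryTwo.map p02 = homOfLE (by decide) := Subsingleton.elim _ _
      have sq : CommSq
          (show Cat.of BoundaryTwo ⟶ Cat.of C from (faithTop a b).toCatHom)
          (show Cat.of BoundaryTwo ⟶ Cat.of (Fin 3) from boundaryTwo.toCatHom)
          (show Cat.of C ⟶ Cat.of D from F.toCatHom)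
          (show Cat.of (Fin 3) ⟶ Cat.of D from Functor.toCatHom (ComposableArrows.mk₂ (F.map a) (𝟙 _))) := by
        constructor
        have : faithTop a b ⋙ F =
            boundaryTwo ⋙ (ComposableArrows.mk₂ (F.map a) (𝟙 (F.obj c₁)) : Fin 3 ⥤ D) := by
          refine Paths.ext_functor ?_ ?_
          · funext x
            exact (show ∀ y : Fin 3, (faithTop a b ⋙ F).obj y =
                (boundaryTwo ⋙ ComposableArrows.mk₂ (F.map a) (𝟙 (F.obj c₁))).obj y by
              intro y; fin_cases y <;> rfl) x
          · intro x y e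
            change BoundaryTwoEdge x y at e
            cases e
            · rw [conj_eqToHom_iff_heq]
              · refine heq_of_eq ?_
                show F.map ((faithTop a b).map p01) =
                  (ComposableArrows.mk₂ (F.map a) (𝟙 (F.obj c₁))).map (boundaryTwo.map p01)
                rw [faithTop_map01, b01]; rfl
              · rfl
            · rw [conj_eqToHom_iff_heq]
              · refine heq_of_eq ?_
                show F.map ((faithTop a b).map p12) =
                  (ComposableArrows.mk₂ (F.map a) (𝟙 (F.obj c₁))).map (boundaryTwo.map p12)
                rw [faithTop_map12, b12]
                show F.map (𝟙 c₁) = 𝟙 _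
                simp
              · rfl
            · rw [conj_eqToHom_iff_heq]
              · refine heq_of_eq ?_
                show F.map ((faithTop a b).map p02) =
                  (ComposableArrows.mk₂ (F.map a) (𝟙 (F.obj c₁))).map (boundaryTwo.map p02)
                rw [faithTop_map02, b02]
                show F.map b = F.map a ≫ 𝟙 _
                rw [← hab]
                show F.map a = F.map a ≫ 𝟙 _
                simp
              · rfl
        exact Cat.Hom.ext this
      obtain ⟨⟨l, hl1, hl2⟩⟩ := (rlp2.sq_hasLift sq).exists_lift
      obtain ⟨l, rfl⟩ : ∃ l' : Fin 3 ⥤ C, l'.toCatHom = l := ⟨l.toFunctor, rfl⟩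
      have hl1' : boundaryTwo ⋙ l = faithTop a b := congrArg Cat.Hom.toFunctor hl1
      have A01 := Functor.congr_hom hl1' p01
      have A12 := Functor.congr_hom hl1' p12
      have A02 := Functor.congr_hom hl1' p02
      simp only [Functor.comp_map, faithTop_map01, faithTop_map12, faithTop_map02,
        b01, b12, b02] at A01 A12 A02
      have hE0 : l.obj (0 : Fin 3) = c₀ :=
        Functor.congr_obj hl1' (show BoundaryTwo from (0:Fin 3))
      have hE1 : l.obj (1 : Fin 3) = c₁ :=
        Functor.congr_obj hl1' (show BoundaryTwo from (1:Fin 3))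
      have hE2 : l.obj (2 : Fin 3) = c₁ :=
        Functor.congr_obj hl1' (show BoundaryTwo from (2:Fin 3))
      have A01' : l.map (homOfLE (show (0:Fin 3) ≤ 1 by decide)) =
          eqToHom hE0 ≫ a ≫ eqToHom hE1.symm := A01
      have A12' : l.map (homOfLE (show (1:Fin 3) ≤ 2 by decide)) =
          eqToHom hE1 ≫ 𝟙 c₁ ≫ eqToHom hE2.symm := A12
      have A02' : l.map (homOfLE (show (0:Fin 3) ≤ 2 by decide)) =
          eqToHom hE0 ≫ b ≫ eqToHom hE2.symm := A02
      have hcomp : l.map (homOfLE (show (0:Fin 3) ≤ 2 by decide)) =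
          l.map (homOfLE (show (0:Fin 3) ≤ 1 by decide)) ≫
          l.map (homOfLE (show (1:Fin 3) ≤ 2 by decide)) := by
        rw [← l.map_comp]
        congr 1
      rw [A01', A12', A02'] at hcomp
      simp only [Category.assoc, eqToHom_trans_assoc, eqToHom_refl, Category.id_comp,
        Category.comp_id] at hcomp
      have h1 := (cancel_epi (eqToHom hE0)).mp hcomp
      exact ((cancel_mono (eqToHom hE2.symm)).mp h1).symm
    -- assemble
    haveI : F.Full := hfull
    haveI : F.Faithful := hfaithful
    haveI : F.EssSurj := ⟨fun d => ⟨(hsurj d).choose, ⟨eqToIso (hsurj d).choose_spec⟩⟩⟩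
    haveI : F.IsEquivalence := { }
    refine ⟨?_, inferInstance⟩
    intro c d v
    obtain ⟨c', hc'⟩ := hsurj d
    refine ⟨c', F.preimageIso (v ≪≫ eqToIso hc'.symm), hc', ?_⟩
    simp
end

section
/- If F : C → D is a functor that admits either a left adjoint or a right adjoint, then the induced functor Π₁(F) : Π₁(C) → Π₁(D) on localizations at all morphisms is an equivalence of groupoids. -/
open CategoryTheory

/-- Every morphism in the localization of a category at all of its morphisms is an
isomorphism. -/
lemma pi1_isIso_of_top {C : Type u₁} [Category.{v₁} C]
    {X Y : (⊤ : MorphismProperty C).Localization} (f : X ⟶ Y) : IsIso f := by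
  have : (MorphismProperty.isomorphisms (⊤ : MorphismProperty C).Localization) = ⊤ := by
    apply Localization.Construction.morphismProperty_eq_top'
    · intro X Y f
      exact Localization.inverts (⊤ : MorphismProperty C).Q ⊤ f trivial
    · intro X Y e he
      exact inferInstanceAs (IsIso e.inv)
  have hf : (MorphismProperty.isomorphisms (⊤ : MorphismProperty C).Localization) f := by
    rw [this]; trivial
  exact hf

/-- The localization functor at ⊤ composed with anything inverts everything. -/
lemma pi1_top_isInvertedBy {C : Type u₁} {D : Type u₂} [Category.{v₁} C] [Category.{v₂} D]
    (G : C ⥤ D) :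
    (⊤ : MorphismProperty C).IsInvertedBy (G ⋙ (⊤ : MorphismProperty D).Q) := by
  intro X Y f _
  exact pi1_isIso_of_top _

/-- If a functor `F : C ⥤ D` admits either a left adjoint or a right adjoint, then the
induced functor `Π₁(F) : Π₁(C) → Π₁(D)` between the localizations of `C` and `D` at all of
their morphisms (the functor obtained by formally inverting every arrow) is an equivalence
of groupoids. -/
theorem pi1_of_adjoint_isEquivalence {C : Type u₁} {D : Type u₂}
    [Category.{v₁} C] [Category.{v₂} D] (F : C ⥤ D)
    (h : F.IsLeftAdjoint ∨ F.IsRightAdjoint)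
    (hinv : (⊤ : MorphismProperty C).IsInvertedBy (F ⋙ (⊤ : MorphismProperty D).Q)) :
    (Localization.Construction.lift (F ⋙ (⊤ : MorphismProperty D).Q) hinv).IsEquivalence := by
  let LC := (⊤ : MorphismProperty C).Q
  let LD := (⊤ : MorphismProperty D).Q
  let F' := Localization.Construction.lift (F ⋙ LD) hinv
  have hF' : LC ⋙ F' = F ⋙ LD := Localization.Construction.fac _ _
  have sqF : CatCommSq F LC LD F' := ⟨eqToIso hF'.symm⟩
  rcases h with h | h
  · -- F is a left adjoint : adj : F ⊣ G
    obtain ⟨G, ⟨adj⟩⟩ := h.exists_rightAdjoint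
    let G' := Localization.Construction.lift (G ⋙ LC) (pi1_top_isInvertedBy G)
    have hG' : LD ⋙ G' = G ⋙ LC := Localization.Construction.fac _ _
    have sqG : CatCommSq G LD LC G' := ⟨eqToIso hG'.symm⟩
    let adj' := adj.localization LC ⊤ LD ⊤ F' G'
    have : ∀ X, IsIso (adj'.unit.app X) := fun X => pi1_isIso_of_top _
    have : ∀ X, IsIso (adj'.counit.app X) := fun X => pi1_isIso_of_top _
    exact adj'.toEquivalence.isEquivalence_functor
  · -- F is a right adjoint : adj : G ⊣ F
    obtain ⟨G, ⟨adj⟩⟩ := h.exists_leftAdjoint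
    let G' := Localization.Construction.lift (G ⋙ LC) (pi1_top_isInvertedBy G)
    have hG' : LD ⋙ G' = G ⋙ LC := Localization.Construction.fac _ _
    have sqG : CatCommSq G LD LC G' := ⟨eqToIso hG'.symm⟩
    let adj' := adj.localization LD ⊤ LC ⊤ G' F'
    have : ∀ X, IsIso (adj'.unit.app X) := fun X => pi1_isIso_of_top _
    have : ∀ X, IsIso (adj'.counit.app X) := fun X => pi1_isIso_of_top _
    exact adj'.toEquivalence.isEquivalence_inverse
end

section
/- Let C be a permutative (strict symmetric monoidal) category and let F : C → Cat be a lax symmetric monoidal functor to the cartesian symmetric monoidal category of small categories. Then the Grothendieck construction (category of elements) ∫ F carries a permutative category structure, with tensor product (c₁, d₁) ⊠ (c₂, d₂) = (c₁ ⊗ c₂, λ_F(c₁,c₂)(d₁, d₂)). -/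
open CategoryTheory MonoidalCategory

/-- A *permutative* (strict symmetric monoidal) category: a monoidal category whose
associativity and unit isomorphisms are identities. -/
class Permutative (C : Type*) [Category C] [MonoidalCategory C] : Prop where
  assoc_eq : ∀ x y z : C, (x ⊗ y) ⊗ z = x ⊗ (y ⊗ z)
  associator_eqToIso : ∀ x y z : C, α_ x y z = eqToIso (assoc_eq x y z)
  unit_tensor_eq : ∀ x : C, 𝟙_ C ⊗ x = x
  leftUnitor_eqToIso : ∀ x : C, λ_ x = eqToIso (unit_tensor_eq x)
  tensor_unit_eq : ∀ x : C, x ⊗ 𝟙_ C = x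
  rightUnitor_eqToIso : ∀ x : C, ρ_ x = eqToIso (tensor_unit_eq x)

variable {C : Type u} [Category.{v} C] [MonoidalCategory C] [SymmetricCategory C]

/-- A lax symmetric monoidal structure on a functor `F : C ⥤ Cat`, where `Cat` carries the
cartesian symmetric monoidal structure: structure functors
`λ_F(c₁, c₂) : F(c₁) × F(c₂) → F(c₁ ⊗ c₂)` and a unit object, satisfying naturality and the
associativity, unit and symmetry coherences of a lax symmetric monoidal functor. -/
structure LaxSMCat (F : C ⥤ Cat.{v', u'}) where
  lax : ∀ c₁ c₂ : C, (↥(F.obj c₁) × ↥(F.obj c₂)) ⥤ ↥(F.obj (c₁ ⊗ c₂))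
  unitObj : ↥(F.obj (𝟙_ C))
  natural : ∀ {c₁ c₁' c₂ c₂' : C} (f : c₁ ⟶ c₁') (g : c₂ ⟶ c₂'),
    Functor.prod ((F.map f).toFunctor : ↥(F.obj c₁) ⥤ ↥(F.obj c₁')) ((F.map g).toFunctor : ↥(F.obj c₂) ⥤ ↥(F.obj c₂'))
        ⋙ lax c₁' c₂' =
      lax c₁ c₂ ⋙ ((F.map (f ⊗ₘ g)).toFunctor : ↥(F.obj (c₁ ⊗ c₂)) ⥤ ↥(F.obj (c₁' ⊗ c₂')))
  assoc : ∀ c₁ c₂ c₃ : C,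
    Functor.prod (lax c₁ c₂) (𝟭 ↥(F.obj c₃)) ⋙ lax (c₁ ⊗ c₂) c₃ ⋙
        ((F.map (α_ c₁ c₂ c₃).hom).toFunctor : ↥(F.obj ((c₁ ⊗ c₂) ⊗ c₃)) ⥤ ↥(F.obj (c₁ ⊗ (c₂ ⊗ c₃)))) =
      prod.associator _ _ _ ⋙ Functor.prod (𝟭 ↥(F.obj c₁)) (lax c₂ c₃) ⋙ lax c₁ (c₂ ⊗ c₃)
  left_unit : ∀ c : C,
    Functor.prod' ((Functor.const ↥(F.obj c)).obj unitObj) (𝟭 ↥(F.obj c)) ⋙ lax (𝟙_ C) c ⋙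
        ((F.map (λ_ c).hom).toFunctor : ↥(F.obj (𝟙_ C ⊗ c)) ⥤ ↥(F.obj c)) =
      𝟭 ↥(F.obj c)
  right_unit : ∀ c : C,
    Functor.prod' (𝟭 ↥(F.obj c)) ((Functor.const ↥(F.obj c)).obj unitObj) ⋙ lax c (𝟙_ C) ⋙
        ((F.map (ρ_ c).hom).toFunctor : ↥(F.obj (c ⊗ 𝟙_ C)) ⥤ ↥(F.obj c)) =
      𝟭 ↥(F.obj c)
  braided : ∀ c₁ c₂ : C,
    CategoryTheory.Prod.swap ↥(F.obj c₁) ↥(F.obj c₂) ⋙ lax c₂ c₁ =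
      lax c₁ c₂ ⋙ ((F.map (β_ c₁ c₂).hom).toFunctor : ↥(F.obj (c₁ ⊗ c₂)) ⥤ ↥(F.obj (c₂ ⊗ c₁)))

set_option linter.unusedSectionVars false
set_option maxHeartbeats 800000
namespace GrPermAux

section
variable {A : Type*} {B : Type*} {D : Type*} [Category A] [Category B] [Category D]

lemma map_pair_comp (G : A × B ⥤ D) {x a a' : A} {y b b' : B}
    (h₁ : x = a) (h₂ : y = b) (u : a ⟶ a') (v : b ⟶ b') :
    G.map ((eqToHom h₁ ≫ u, eqToHom h₂ ≫ v) : (x, y) ⟶ (a', b')) =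
      eqToHom (by rw [h₁, h₂]) ≫ G.map (u, v) := by
  subst h₁; subst h₂; simp only [eqToHom_refl, Category.id_comp]

lemma map_pair_left (G : A × B ⥤ D) {x a a' : A} {b b' : B}
    (h₁ : x = a) (u : a ⟶ a') (v : b ⟶ b') :
    G.map ((eqToHom h₁ ≫ u, v) : (x, b) ⟶ (a', b')) =
      eqToHom (by rw [h₁]) ≫ G.map (u, v) := by
  subst h₁; simp only [eqToHom_refl, Category.id_comp]

lemma map_pair_right (G : A × B ⥤ D) {a a' : A} {y b b' : B}
    (h₂ : y = b) (u : a ⟶ a') (v : b ⟶ b') :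
    G.map ((u, eqToHom h₂ ≫ v) : (a, y) ⟶ (a', b')) =
      eqToHom (by rw [h₂]) ≫ G.map (u, v) := by
  subst h₂; simp only [eqToHom_refl, Category.id_comp]

lemma map_pair_fst (G : A × B ⥤ D) {x a : A} {b b' : B}
    (h₁ : x = a) (v : b ⟶ b') :
    G.map ((eqToHom h₁, v) : (x, b) ⟶ (a, b')) =
      eqToHom (by rw [h₁]) ≫ G.map (𝟙 a, v) := by
  subst h₁; simp

lemma map_pair_snd (G : A × B ⥤ D) {a a' : A} {y b : B}
    (h₂ : y = b) (u : a ⟶ a') :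
    G.map ((u, eqToHom h₂) : (a, y) ⟶ (a', b)) =
      eqToHom (by rw [h₂]) ≫ G.map (u, 𝟙 b) := by
  subst h₂; simp

lemma map_pair_ee (G : A × B ⥤ D) {x a : A} {y b : B}
    (h₁ : x = a) (h₂ : y = b) :
    G.map ((eqToHom h₁, eqToHom h₂) : (x, y) ⟶ (a, b)) = eqToHom (by rw [h₁, h₂]) := by
  subst h₁; subst h₂
  simp only [eqToHom_refl]
  exact G.map_id _

end

variable [Permutative C] (F : C ⥤ Cat.{v', u'}) (L : LaxSMCat F)

lemma obj_ext {X Y : Grothendieck F} (h₁ : X.base = Y.base)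
    (h₂ : (F.map (eqToHom h₁)).toFunctor.obj X.fiber = Y.fiber) : X = Y := by
  obtain ⟨xb, xf⟩ := X; obtain ⟨yb, yf⟩ := Y
  obtain rfl : xb = yb := h₁
  obtain rfl : xf = yf := by simpa using h₂
  rfl

/-- tensor product of objects -/
abbrev tObj (X Y : Grothendieck F) : Grothendieck F :=
  ⟨X.base ⊗ Y.base, (L.lax X.base Y.base).obj (X.fiber, Y.fiber)⟩

lemma lax_natural_obj {c₁ c₁' c₂ c₂' : C} (f : c₁ ⟶ c₁') (g : c₂ ⟶ c₂')
    (d₁ : F.obj c₁) (d₂ : F.obj c₂) :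
    (F.map (f ⊗ₘ g)).toFunctor.obj ((L.lax c₁ c₂).obj (d₁, d₂)) =
      (L.lax c₁' c₂').obj ((F.map f).toFunctor.obj d₁, (F.map g).toFunctor.obj d₂) :=
  (Functor.congr_obj (L.natural f g) (d₁, d₂)).symm

/-- tensor product of morphisms -/
@[reducible] def tHom {X X' Y Y' : Grothendieck F} (f : X ⟶ X') (g : Y ⟶ Y') :
    tObj F L X Y ⟶ tObj F L X' Y' where
  base := f.base ⊗ₘ g.base
  fiber := eqToHom (lax_natural_obj F L f.base g.base X.fiber Y.fiber) ≫
    (L.lax X'.base Y'.base).map (f.fiber, g.fiber)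





abbrev gUnit : Grothendieck F := ⟨𝟙_ C, L.unitObj⟩

lemma assocObjEq (X Y Z : Grothendieck F) :
    tObj F L (tObj F L X Y) Z = tObj F L X (tObj F L Y Z) := by
  apply obj_ext F (h₁ := Permutative.assoc_eq X.base Y.base Z.base)
  have h := Functor.congr_obj (L.assoc X.base Y.base Z.base) ((X.fiber, Y.fiber), Z.fiber)
  rw [Permutative.associator_eqToIso] at h
  simpa [tObj] using h

lemma leftUnitObjEq (X : Grothendieck F) : tObj F L (gUnit F L) X = X := by
  apply obj_ext F (h₁ := Permutative.unit_tensor_eq X.base)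
  have h := Functor.congr_obj (L.left_unit X.base) X.fiber
  rw [Permutative.leftUnitor_eqToIso] at h
  simpa [tObj, gUnit] using h

lemma rightUnitObjEq (X : Grothendieck F) : tObj F L X (gUnit F L) = X := by
  apply obj_ext F (h₁ := Permutative.tensor_unit_eq X.base)
  have h := Functor.congr_obj (L.right_unit X.base) X.fiber
  rw [Permutative.rightUnitor_eqToIso] at h
  simpa [tObj, gUnit] using h

lemma tHom_id (X Y : Grothendieck F) : tHom F L (𝟙 X) (𝟙 Y) = 𝟙 (tObj F L X Y) := by
  refine Grothendieck.ext _ _ (id ?_) ?_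
  · exact MonoidalCategory.id_tensorHom_id _ _
  · simp only [tHom, tObj, Grothendieck.id_fiber]
    rw [map_pair_ee]; simp
    generalize_proofs
    simp

lemma tHom_comp {X X' X'' Y Y' Y'' : Grothendieck F}
    (f : X ⟶ X') (f' : X' ⟶ X'') (g : Y ⟶ Y') (g' : Y' ⟶ Y'') :
    tHom F L (f ≫ f') (g ≫ g') = tHom F L f g ≫ tHom F L f' g' := by
  refine Grothendieck.ext _ _ (id ?_) ?_
  · exact (MonoidalCategory.tensorHom_comp_tensorHom _ _ _ _).symm
  · have key := Functor.congr_hom (L.natural f'.base g'.base)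
      ((f.fiber, g.fiber) : ((F.map f.base).toFunctor.obj X.fiber, (F.map g.base).toFunctor.obj Y.fiber) ⟶ (X'.fiber, Y'.fiber))
    simp only [Functor.comp_map, Functor.prod_map] at key
    simp only [tHom, Grothendieck.comp_fiber]
    rw [map_pair_comp]
    have hsplit : (((F.map f'.base).toFunctor.map f.fiber ≫ f'.fiber,
        (F.map g'.base).toFunctor.map g.fiber ≫ g'.fiber) :
        ((F.map f'.base).toFunctor.obj ((F.map f.base).toFunctor.obj X.fiber),
         (F.map g'.base).toFunctor.obj ((F.map g.base).toFunctor.obj Y.fiber)) ⟶ (X''.fiber, Y''.fiber)) =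
      (show (((F.map f'.base).toFunctor.obj ((F.map f.base).toFunctor.obj X.fiber),
            (F.map g'.base).toFunctor.obj ((F.map g.base).toFunctor.obj Y.fiber)) ⟶
            ((F.map f'.base).toFunctor.obj X'.fiber, (F.map g'.base).toFunctor.obj Y'.fiber)) from
          ((F.map f'.base).toFunctor.map f.fiber, (F.map g'.base).toFunctor.map g.fiber)) ≫
        ((f'.fiber, g'.fiber) : _ ⟶ (X''.fiber, Y''.fiber)) := rfl
    rw [hsplit]
    simp only [Functor.map_comp]
    rw [key]
    simp [eqToHom_map, eqToHom_trans_assoc, Category.assoc]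
    generalize_proofs
    simp



@[reducible] def aHom (X Y Z : Grothendieck F) : tObj F L (tObj F L X Y) Z ⟶ tObj F L X (tObj F L Y Z) where
  base := (α_ X.base Y.base Z.base).hom
  fiber := eqToHom (by
    have h := Functor.congr_obj (L.assoc X.base Y.base Z.base) ((X.fiber, Y.fiber), Z.fiber)
    simpa [tObj] using h)

@[reducible] def lHom (X : Grothendieck F) : tObj F L (gUnit F L) X ⟶ X where
  base := (λ_ X.base).hom
  fiber := eqToHom (by
    have h := Functor.congr_obj (L.left_unit X.base) X.fiber
    simpa [tObj, gUnit] using h)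

@[reducible] def rHom (X : Grothendieck F) : tObj F L X (gUnit F L) ⟶ X where
  base := (ρ_ X.base).hom
  fiber := eqToHom (by
    have h := Functor.congr_obj (L.right_unit X.base) X.fiber
    simpa [tObj, gUnit] using h)

@[reducible] def bHom (X Y : Grothendieck F) : tObj F L X Y ⟶ tObj F L Y X where
  base := (β_ X.base Y.base).hom
  fiber := eqToHom (by
    have h := Functor.congr_obj (L.braided X.base Y.base) (X.fiber, Y.fiber)
    simpa [tObj] using h.symm)

lemma aHom_eq (X Y Z : Grothendieck F) : aHom F L X Y Z = eqToHom (assocObjEq F L X Y Z) := by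
  rw [Grothendieck.eqToHom_eq]
  refine Grothendieck.ext _ _ (id ?_) ?_
  · show (α_ X.base Y.base Z.base).hom = eqToHom (Permutative.assoc_eq X.base Y.base Z.base)
    rw [Permutative.associator_eqToIso X.base Y.base Z.base]
    rfl
  · simp [aHom]

lemma lHom_eq (X : Grothendieck F) : lHom F L X = eqToHom (leftUnitObjEq F L X) := by
  rw [Grothendieck.eqToHom_eq]
  refine Grothendieck.ext _ _ (id ?_) ?_
  · show (λ_ X.base).hom = eqToHom (Permutative.unit_tensor_eq X.base)
    rw [Permutative.leftUnitor_eqToIso X.base]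
    rfl
  · simp [lHom]

lemma rHom_eq (X : Grothendieck F) : rHom F L X = eqToHom (rightUnitObjEq F L X) := by
  rw [Grothendieck.eqToHom_eq]
  refine Grothendieck.ext _ _ (id ?_) ?_
  · show (ρ_ X.base).hom = eqToHom (Permutative.tensor_unit_eq X.base)
    rw [Permutative.rightUnitor_eqToIso X.base]
    rfl
  · simp [rHom]

lemma assoc_nat {X₁ X₂ X₃ Y₁ Y₂ Y₃ : Grothendieck F}
    (f₁ : X₁ ⟶ Y₁) (f₂ : X₂ ⟶ Y₂) (f₃ : X₃ ⟶ Y₃) :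
    tHom F L (tHom F L f₁ f₂) f₃ ≫ aHom F L Y₁ Y₂ Y₃ =
      aHom F L X₁ X₂ X₃ ≫ tHom F L f₁ (tHom F L f₂ f₃) := by
  refine Grothendieck.ext _ _ (id ?_) ?_
  · exact MonoidalCategory.associator_naturality f₁.base f₂.base f₃.base
  · have key := Functor.congr_hom (L.assoc Y₁.base Y₂.base Y₃.base)
      (((f₁.fiber, f₂.fiber), f₃.fiber) :
        (((F.map f₁.base).toFunctor.obj X₁.fiber, (F.map f₂.base).toFunctor.obj X₂.fiber),
          (F.map f₃.base).toFunctor.obj X₃.fiber) ⟶ ((Y₁.fiber, Y₂.fiber), Y₃.fiber))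
    simp only [Functor.comp_map, Functor.prod_map, Functor.id_map] at key
    have hassoc : (prod.associator (↥(F.obj Y₁.base)) (↥(F.obj Y₂.base)) (↥(F.obj Y₃.base))).map
        (((f₁.fiber, f₂.fiber), f₃.fiber) :
        (((F.map f₁.base).toFunctor.obj X₁.fiber, (F.map f₂.base).toFunctor.obj X₂.fiber),
          (F.map f₃.base).toFunctor.obj X₃.fiber) ⟶ ((Y₁.fiber, Y₂.fiber), Y₃.fiber)) =
        (f₁.fiber, (f₂.fiber, f₃.fiber)) := rfl
    rw [hassoc] at key
    dsimp only at key
    simp only [tHom, aHom, tObj, Grothendieck.comp_fiber]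
    rw [map_pair_left, map_pair_right]
    simp only [Functor.map_comp, eqToHom_map, Category.assoc, eqToHom_trans_assoc]
    rw [key]
    simp only [Category.assoc, eqToHom_trans, eqToHom_trans_assoc, eqToHom_refl,
      Category.comp_id, Category.id_comp]
    dsimp only [Grothendieck.id_base, Grothendieck.comp_base, Functor.comp_obj, Functor.prod_obj,
      Functor.id_obj, prod.associator_obj]
    generalize_proofs p1 p2 p3 p4
    simp
    rw [show eqToHom p3 = 𝟙 _ from rfl]
    exact (Category.assoc _ _ _).symm.trans ((Category.comp_id _).trans rfl)

lemma lUnit_nat {X Y : Grothendieck F} (f : X ⟶ Y) :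
    tHom F L (𝟙 (gUnit F L)) f ≫ lHom F L Y = lHom F L X ≫ f := by
  refine Grothendieck.ext _ _ (id ?_) ?_
  · show (𝟙 (𝟙_ C) ⊗ₘ f.base) ≫ (λ_ Y.base).hom = (λ_ X.base).hom ≫ f.base
    simp
  · have key := Functor.congr_hom (L.left_unit Y.base) f.fiber
    simp only [Functor.comp_map, Functor.prod'_map, Functor.const_obj_map, Functor.id_map] at key
    simp only [tHom, lHom, tObj, gUnit, Grothendieck.comp_fiber, Grothendieck.id_fiber]
    rw [map_pair_fst]
    simp only [Functor.map_comp, eqToHom_map, Category.assoc, eqToHom_trans_assoc]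
    rw [key]
    simp only [Category.assoc, eqToHom_trans, eqToHom_trans_assoc, eqToHom_refl,
      Category.comp_id, Category.id_comp]
    dsimp only [Grothendieck.id_base, Grothendieck.comp_base]
    generalize_proofs
    simp

lemma rUnit_nat {X Y : Grothendieck F} (f : X ⟶ Y) :
    tHom F L f (𝟙 (gUnit F L)) ≫ rHom F L Y = rHom F L X ≫ f := by
  refine Grothendieck.ext _ _ (id ?_) ?_
  · show (f.base ⊗ₘ 𝟙 (𝟙_ C)) ≫ (ρ_ Y.base).hom = (ρ_ X.base).hom ≫ f.base
    simp
  · have key := Functor.congr_hom (L.right_unit Y.base) f.fiber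
    simp only [Functor.comp_map, Functor.prod'_map, Functor.const_obj_map, Functor.id_map] at key
    simp only [tHom, rHom, tObj, gUnit, Grothendieck.comp_fiber, Grothendieck.id_fiber]
    rw [map_pair_snd]
    simp only [Functor.map_comp, eqToHom_map, Category.assoc, eqToHom_trans_assoc]
    rw [key]
    simp only [Category.assoc, eqToHom_trans, eqToHom_trans_assoc, eqToHom_refl,
      Category.comp_id, Category.id_comp]
    dsimp only [Grothendieck.id_base, Grothendieck.comp_base]
    generalize_proofs
    simp

lemma b_nat_right {Y Z : Grothendieck F} (X : Grothendieck F) (f : Y ⟶ Z) :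
    tHom F L (𝟙 X) f ≫ bHom F L X Z = bHom F L X Y ≫ tHom F L f (𝟙 X) := by
  refine Grothendieck.ext _ _ (id ?_) ?_
  · exact BraidedCategory.braiding_naturality (𝟙 X.base) f.base
  · have key := Functor.congr_hom (L.braided X.base Z.base)
      ((𝟙 X.fiber, f.fiber) : (X.fiber, (F.map f.base).toFunctor.obj Y.fiber) ⟶ (X.fiber, Z.fiber))
    simp only [Functor.comp_map, CategoryTheory.Prod.swap_map, Functor.id_map] at key
    simp only [tHom, bHom, tObj, Grothendieck.comp_fiber, Grothendieck.id_fiber]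
    rw [map_pair_fst, map_pair_snd]
    simp only [Functor.map_comp, eqToHom_map, Category.assoc, eqToHom_trans_assoc]
    rw [key]
    simp only [Category.assoc, eqToHom_trans, eqToHom_trans_assoc, eqToHom_refl,
      Category.comp_id, Category.id_comp]
    dsimp only [Grothendieck.id_base, Grothendieck.comp_base]
    generalize_proofs
    simp

lemma b_nat_left {X Y : Grothendieck F} (f : X ⟶ Y) (Z : Grothendieck F) :
    tHom F L f (𝟙 Z) ≫ bHom F L Y Z = bHom F L X Z ≫ tHom F L (𝟙 Z) f := by
  refine Grothendieck.ext _ _ (id ?_) ?_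
  · exact BraidedCategory.braiding_naturality f.base (𝟙 Z.base)
  · have key := Functor.congr_hom (L.braided Y.base Z.base)
      ((f.fiber, 𝟙 Z.fiber) : ((F.map f.base).toFunctor.obj X.fiber, Z.fiber) ⟶ (Y.fiber, Z.fiber))
    simp only [Functor.comp_map, CategoryTheory.Prod.swap_map, Functor.id_map] at key
    simp only [tHom, bHom, tObj, Grothendieck.comp_fiber, Grothendieck.id_fiber]
    rw [map_pair_snd, map_pair_fst]
    simp only [Functor.map_comp, eqToHom_map, Category.assoc, eqToHom_trans_assoc]
    rw [key]
    simp only [Category.assoc, eqToHom_trans, eqToHom_trans_assoc, eqToHom_refl,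
      Category.comp_id, Category.id_comp]
    dsimp only [Grothendieck.id_base, Grothendieck.comp_base]
    generalize_proofs
    simp

lemma fiber_of_eq {P Q : Grothendieck F} (h : P = Q) (hb : Q.base = P.base) :
    (F.map (eqToHom hb)).toFunctor.obj Q.fiber = P.fiber := by
  subst h
  simpa using Functor.congr_obj (F.map_id P.base) P.fiber

lemma gPentagon (W X Y Z : Grothendieck F) :
    tHom F L (aHom F L W X Y) (𝟙 Z) ≫ aHom F L W (tObj F L X Y) Z ≫
        tHom F L (𝟙 W) (aHom F L X Y Z) =
      aHom F L (tObj F L W X) Y Z ≫ aHom F L W X (tObj F L Y Z) := by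
  refine Grothendieck.ext _ _ (id ?_) ?_
  · show ((α_ W.base X.base Y.base).hom ⊗ₘ 𝟙 Z.base) ≫ (α_ W.base (X.base ⊗ Y.base) Z.base).hom ≫
        (𝟙 W.base ⊗ₘ (α_ X.base Y.base Z.base).hom) =
      (α_ (W.base ⊗ X.base) Y.base Z.base).hom ≫ (α_ W.base X.base (Y.base ⊗ Z.base)).hom
    simp [MonoidalCategory.pentagon]
  · simp only [tHom, aHom, tObj, Grothendieck.comp_fiber, Grothendieck.id_fiber]
    rw [map_pair_ee, map_pair_ee]
    simp only [eqToHom_map, eqToHom_trans, eqToHom_trans_assoc, Category.assoc, eqToHom_refl,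
      Category.comp_id, Category.id_comp]
    dsimp only [Grothendieck.id_base, Grothendieck.comp_base]
    generalize_proofs
    simp

lemma gTriangle (X Y : Grothendieck F) :
    aHom F L X (gUnit F L) Y ≫ tHom F L (𝟙 X) (lHom F L Y) =
      tHom F L (rHom F L X) (𝟙 Y) := by
  refine Grothendieck.ext _ _ (id ?_) ?_
  · show (α_ X.base (𝟙_ C) Y.base).hom ≫ (𝟙 X.base ⊗ₘ (λ_ Y.base).hom) =
      ((ρ_ X.base).hom ⊗ₘ 𝟙 Y.base)
    simp
  · simp only [tHom, aHom, lHom, rHom, tObj, gUnit, Grothendieck.comp_fiber,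
      Grothendieck.id_fiber]
    rw [map_pair_ee, map_pair_ee]
    simp only [eqToHom_map, eqToHom_trans, eqToHom_trans_assoc, Category.assoc, eqToHom_refl,
      Category.comp_id, Category.id_comp]
    dsimp only [Grothendieck.id_base, Grothendieck.comp_base]
    generalize_proofs
    simp

lemma gSymmetry (X Y : Grothendieck F) :
    bHom F L X Y ≫ bHom F L Y X = 𝟙 (tObj F L X Y) := by
  refine Grothendieck.ext _ _ (id ?_) ?_
  · exact SymmetricCategory.symmetry X.base Y.base
  · simp only [tHom, bHom, tObj, Grothendieck.comp_fiber, Grothendieck.id_fiber]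
    simp only [eqToHom_map, eqToHom_trans, eqToHom_trans_assoc, Category.assoc, eqToHom_refl,
      Category.comp_id, Category.id_comp]

lemma gHexFwd (X Y Z : Grothendieck F) :
    aHom F L X Y Z ≫ bHom F L X (tObj F L Y Z) ≫ aHom F L Y Z X =
      tHom F L (bHom F L X Y) (𝟙 Z) ≫ aHom F L Y X Z ≫ tHom F L (𝟙 Y) (bHom F L X Z) := by
  refine Grothendieck.ext _ _ (id ?_) ?_
  · show (α_ X.base Y.base Z.base).hom ≫ (β_ X.base (Y.base ⊗ Z.base)).hom ≫
        (α_ Y.base Z.base X.base).hom =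
      ((β_ X.base Y.base).hom ⊗ₘ 𝟙 Z.base) ≫ (α_ Y.base X.base Z.base).hom ≫
        (𝟙 Y.base ⊗ₘ (β_ X.base Z.base).hom)
    simpa using BraidedCategory.hexagon_forward X.base Y.base Z.base
  · simp only [tHom, aHom, bHom, tObj, Grothendieck.comp_fiber, Grothendieck.id_fiber]
    rw [map_pair_ee, map_pair_ee]
    simp only [eqToHom_map, eqToHom_trans, eqToHom_trans_assoc, Category.assoc, eqToHom_refl,
      Category.comp_id, Category.id_comp]
    dsimp only [Grothendieck.id_base, Grothendieck.comp_base]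
    generalize_proofs
    simp

@[reducible] def aInv (X Y Z : Grothendieck F) : tObj F L X (tObj F L Y Z) ⟶ tObj F L (tObj F L X Y) Z where
  base := (α_ X.base Y.base Z.base).inv
  fiber := eqToHom (by
    rw [show (α_ X.base Y.base Z.base).inv =
        eqToHom (Permutative.assoc_eq X.base Y.base Z.base).symm from by
      rw [Permutative.associator_eqToIso]; rfl]
    exact fiber_of_eq F (assocObjEq F L X Y Z) _)

lemma aInv_eq (X Y Z : Grothendieck F) :
    aInv F L X Y Z = eqToHom (assocObjEq F L X Y Z).symm := by
  rw [Grothendieck.eqToHom_eq]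
  refine Grothendieck.ext _ _ (id ?_) ?_
  · show (α_ X.base Y.base Z.base).inv = eqToHom (Permutative.assoc_eq X.base Y.base Z.base).symm
    rw [Permutative.associator_eqToIso]; rfl
  · simp [aInv]

lemma gHexRev (X Y Z : Grothendieck F) :
    aInv F L X Y Z ≫ bHom F L (tObj F L X Y) Z ≫ aInv F L Z X Y =
      tHom F L (𝟙 X) (bHom F L Y Z) ≫ aInv F L X Z Y ≫ tHom F L (bHom F L X Z) (𝟙 Y) := by
  refine Grothendieck.ext _ _ (id ?_) ?_
  · show (α_ X.base Y.base Z.base).inv ≫ (β_ (X.base ⊗ Y.base) Z.base).hom ≫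
        (α_ Z.base X.base Y.base).inv =
      (𝟙 X.base ⊗ₘ (β_ Y.base Z.base).hom) ≫ (α_ X.base Z.base Y.base).inv ≫
        ((β_ X.base Z.base).hom ⊗ₘ 𝟙 Y.base)
    simpa using BraidedCategory.hexagon_reverse X.base Y.base Z.base
  · simp only [tHom, aInv, bHom, tObj, Grothendieck.comp_fiber, Grothendieck.id_fiber]
    rw [map_pair_ee, map_pair_ee]
    simp only [eqToHom_map, eqToHom_trans, eqToHom_trans_assoc, Category.assoc, eqToHom_refl,
      Category.comp_id, Category.id_comp]
    dsimp only [Grothendieck.id_base, Grothendieck.comp_base]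
    generalize_proofs
    simp

lemma assoc_nat' {X₁ X₂ X₃ Y₁ Y₂ Y₃ : Grothendieck F}
    (f₁ : X₁ ⟶ Y₁) (f₂ : X₂ ⟶ Y₂) (f₃ : X₃ ⟶ Y₃) :
    tHom F L (tHom F L f₁ f₂) f₃ ≫ eqToHom (assocObjEq F L Y₁ Y₂ Y₃) =
      eqToHom (assocObjEq F L X₁ X₂ X₃) ≫ tHom F L f₁ (tHom F L f₂ f₃) := by
  rw [← aHom_eq, ← aHom_eq]; exact assoc_nat F L f₁ f₂ f₃

lemma lUnit_nat' {X Y : Grothendieck F} (f : X ⟶ Y) :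
    tHom F L (𝟙 (gUnit F L)) f ≫ eqToHom (leftUnitObjEq F L Y) =
      eqToHom (leftUnitObjEq F L X) ≫ f := by
  rw [← lHom_eq, ← lHom_eq]; exact lUnit_nat F L f

lemma rUnit_nat' {X Y : Grothendieck F} (f : X ⟶ Y) :
    tHom F L f (𝟙 (gUnit F L)) ≫ eqToHom (rightUnitObjEq F L Y) =
      eqToHom (rightUnitObjEq F L X) ≫ f := by
  rw [← rHom_eq, ← rHom_eq]; exact rUnit_nat F L f

lemma gPentagon' (W X Y Z : Grothendieck F) :
    tHom F L (eqToHom (assocObjEq F L W X Y)) (𝟙 Z) ≫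
        eqToHom (assocObjEq F L W (tObj F L X Y) Z) ≫
        tHom F L (𝟙 W) (eqToHom (assocObjEq F L X Y Z)) =
      eqToHom (assocObjEq F L (tObj F L W X) Y Z) ≫
        eqToHom (assocObjEq F L W X (tObj F L Y Z)) := by
  rw [← aHom_eq, ← aHom_eq, ← aHom_eq, ← aHom_eq, ← aHom_eq]; exact gPentagon F L W X Y Z

lemma gTriangle' (X Y : Grothendieck F) :
    eqToHom (assocObjEq F L X (gUnit F L) Y) ≫
        tHom F L (𝟙 X) (eqToHom (leftUnitObjEq F L Y)) =
      tHom F L (eqToHom (rightUnitObjEq F L X)) (𝟙 Y) := by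
  rw [← aHom_eq, ← lHom_eq, ← rHom_eq]; exact gTriangle F L X Y

lemma gHexFwd' (X Y Z : Grothendieck F) :
    eqToHom (assocObjEq F L X Y Z) ≫ bHom F L X (tObj F L Y Z) ≫
        eqToHom (assocObjEq F L Y Z X) =
      tHom F L (bHom F L X Y) (𝟙 Z) ≫ eqToHom (assocObjEq F L Y X Z) ≫
        tHom F L (𝟙 Y) (bHom F L X Z) := by
  rw [← aHom_eq, ← aHom_eq, ← aHom_eq]; exact gHexFwd F L X Y Z

lemma gHexRev' (X Y Z : Grothendieck F) :
    eqToHom (assocObjEq F L X Y Z).symm ≫ bHom F L (tObj F L X Y) Z ≫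
        eqToHom (assocObjEq F L Z X Y).symm =
      tHom F L (𝟙 X) (bHom F L Y Z) ≫ eqToHom (assocObjEq F L X Z Y).symm ≫
        tHom F L (bHom F L X Z) (𝟙 Y) := by
  rw [← aInv_eq, ← aInv_eq, ← aInv_eq]; exact gHexRev F L X Y Z

def gStruct : MonoidalCategoryStruct (Grothendieck F) where
  tensorObj := tObj F L
  whiskerLeft X _ _ f := tHom F L (𝟙 X) f
  whiskerRight f Y := tHom F L f (𝟙 Y)
  tensorHom := tHom F L
  tensorUnit := gUnit F L
  associator X Y Z := eqToIso (assocObjEq F L X Y Z)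
  leftUnitor X := eqToIso (leftUnitObjEq F L X)
  rightUnitor X := eqToIso (rightUnitObjEq F L X)

def gMonoidal : MonoidalCategory (Grothendieck F) :=
  letI : MonoidalCategoryStruct (Grothendieck F) := gStruct F L
  MonoidalCategory.ofTensorHom
    (id_tensorHom_id := tHom_id F L)
    (id_tensorHom := fun X {Y₁ Y₂} f => rfl)
    (tensorHom_id := fun {X₁ X₂} f Y => rfl)
    (tensorHom_comp_tensorHom := fun {X₁ Y₁ Z₁ X₂ Y₂ Z₂} f₁ f₂ g₁ g₂ => (tHom_comp F L f₁ g₁ f₂ g₂).symm)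
    (associator_naturality := fun {X₁ X₂ X₃ Y₁ Y₂ Y₃} f₁ f₂ f₃ => assoc_nat' F L f₁ f₂ f₃)
    (leftUnitor_naturality := fun {X Y} f => lUnit_nat' F L f)
    (rightUnitor_naturality := fun {X Y} f => rUnit_nat' F L f)
    (pentagon := fun W X Y Z => gPentagon' F L W X Y Z)
    (triangle := fun X Y => gTriangle' F L X Y)

def gSymm : @SymmetricCategory (Grothendieck F) _ (gMonoidal F L) :=
  letI : MonoidalCategory (Grothendieck F) := gMonoidal F L
  { braiding := fun X Y => ⟨bHom F L X Y, bHom F L Y X, gSymmetry F L X Y, gSymmetry F L Y X⟩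
    braiding_naturality_right := fun X {Y Z} f => b_nat_right F L X f
    braiding_naturality_left := fun {X Y} f Z => b_nat_left F L f Z
    hexagon_forward := fun X Y Z => gHexFwd' F L X Y Z
    hexagon_reverse := fun X Y Z => gHexRev' F L X Y Z
    symmetry := fun X Y => gSymmetry F L X Y }

def gPerm : @Permutative (Grothendieck F) _ (gMonoidal F L) :=
  letI : MonoidalCategory (Grothendieck F) := gMonoidal F L
  { assoc_eq := assocObjEq F L
    associator_eqToIso := fun _ _ _ => rfl
    unit_tensor_eq := leftUnitObjEq F L
    leftUnitor_eqToIso := fun _ => rfl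
    tensor_unit_eq := rightUnitObjEq F L
    rightUnitor_eqToIso := fun _ => rfl }
end GrPermAux

/-- Let `C` be a permutative category and `F : C → Cat` a lax symmetric monoidal functor to
the cartesian symmetric monoidal category of small categories. Then the Grothendieck
construction (category of elements) `∫ F` carries a permutative (strict symmetric monoidal)
category structure whose tensor product is given by
`(c₁, d₁) ⊠ (c₂, d₂) = (c₁ ⊗ c₂, λ_F(c₁, c₂)(d₁, d₂))`. -/
theorem grothendieck_of_laxSM_is_permutative [Permutative C]
    (F : C ⥤ Cat.{v', u'}) (L : LaxSMCat F) :
    ∃ (M : MonoidalCategory (Grothendieck F)) (_ : @SymmetricCategory _ _ M),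
      (@Permutative _ _ M) ∧
      ∀ X Y : Grothendieck F,
        (@MonoidalCategoryStruct.tensorObj _ _ M.toMonoidalCategoryStruct X Y) =
          ⟨X.base ⊗ Y.base, (L.lax X.base Y.base).obj (X.fiber, Y.fiber)⟩ := by
  exact ⟨GrPermAux.gMonoidal F L, GrPermAux.gSymm F L, GrPermAux.gPerm F L, fun X Y => rfl⟩
end

section
/- For each n ∈ ℕ, the inclusion functor from the free permutative category on n copies of L(1) into L(n), induced by the n projections δⁿ_k : n⁺ → 1⁺, is an equivalence of categories which is injective on objects; in particular every object of L(n) is isomorphic to one in the image. -/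
open CategoryTheory

/-- An object of the permutative groupoid `L(n)`: a finite sequence `(S₁, ..., S_r)` of
subsets of `{1, ..., n}`. -/
def LObj (n : ℕ) : Type := List (Finset (Fin n))

/-- The disjoint union `S₁ ⊔ ... ⊔ S_r` of the members of a sequence of subsets of
`{1, ..., n}`. -/
def LTot {n : ℕ} (S : LObj n) : Type :=
  Σ i : Fin (List.length S), {x : Fin n // x ∈ S.get i}

/-- The canonical inclusion `S₁ ⊔ ... ⊔ S_r → {1, ..., n}`. -/
def LTot.val {n : ℕ} {S : LObj n} (z : LTot S) : Fin n := z.2.1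

/-- A morphism `(S₁, ..., S_r) → (T₁, ..., T_k)` in `L(n)`: a bijection
`S₁ ⊔ ... ⊔ S_r ≃ T₁ ⊔ ... ⊔ T_k` commuting with the canonical inclusions into
`{1, ..., n}`. -/
def LHom {n : ℕ} (S T : LObj n) : Type :=
  {e : LTot S ≃ LTot T // ∀ z : LTot S, (e z).val = z.val}

instance (n : ℕ) : Category (LObj n) where
  Hom := LHom
  id S := ⟨Equiv.refl _, fun _ => rfl⟩
  comp e f := ⟨e.1.trans f.1, fun z => (f.2 (e.1 z)).trans (e.2 z)⟩
  id_comp := by intros; apply Subtype.ext; apply Equiv.ext; intro; rfl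
  comp_id := by intros; apply Subtype.ext; apply Equiv.ext; intro; rfl
  assoc := by intros; apply Subtype.ext; apply Equiv.ext; intro; rfl

/-- The objects of the coproduct `⋁ₖ L(1)` (the free permutative category on `n` copies of
`L(1)`, included in `L(n)` via the `n` projections `δⁿ_k : n⁺ → 1⁺`): the finite sequences
all of whose members are empty or singleton subsets of `{1, ..., n}`. -/
def IsSmallObj {n : ℕ} (S : LObj n) : Prop :=
  ∀ i : Fin (List.length S), Finset.card (S.get i) ≤ 1


instance instFintypeLTot {n : ℕ} (S : LObj n) : Fintype (LTot S) := by
  unfold LTot; infer_instance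

/-- The fiber of the canonical inclusion over `x` is equivalent to the set of indices `i`
with `x ∈ Sᵢ`. -/
def fiberEquivIdx {n : ℕ} (S : LObj n) (x : Fin n) :
    {z : LTot S // z.val = x} ≃ {i : Fin (List.length S) // x ∈ S.get i} where
  toFun := fun ⟨⟨i, y, hy⟩, h⟩ => ⟨i, h ▸ hy⟩
  invFun i := ⟨⟨i.1, ⟨x, i.2⟩⟩, rfl⟩
  left_inv z := by rcases z with ⟨⟨i, y, hy⟩, rfl⟩; rfl
  right_inv i := rfl

lemma card_subtype_get {α : Type*} (l : List α) (p : α → Prop) [DecidablePred p] :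
    Fintype.card {i : Fin l.length // p (l.get i)} = l.countP (fun a => decide (p a)) := by
  induction l with
  | nil => simp [Fintype.card_eq_zero]
  | cons a l ih =>
    rw [Fintype.card_subtype, Finset.card_filter]
    simp only [List.length_cons]
    rw [Fin.sum_univ_succ]
    simp only [List.get_cons_succ, List.countP_cons, ← ih, Fintype.card_subtype,
      Finset.card_filter]
    simp [List.get]
    exact add_comm _ _

/-- Two objects of `L(n)` with equinumerous fibers over every point are isomorphic. -/
noncomputable def isoOfCard {n : ℕ} (S T : LObj n)
    (h : ∀ x : Fin n, Fintype.card {z : LTot S // z.val = x}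
        = Fintype.card {z : LTot T // z.val = x}) : S ≅ T := by
  let f : ∀ x, {z : LTot S // z.val = x} ≃ {z : LTot T // z.val = x} :=
    fun x => Fintype.equivOfCardEq (h x)
  let e : LTot S ≃ LTot T :=
    ((Equiv.sigmaFiberEquiv (@LTot.val n S)).symm.trans
      (Equiv.sigmaCongrRight f)).trans (Equiv.sigmaFiberEquiv (@LTot.val n T))
  have he : ∀ z : LTot S, (e z).val = z.val := fun z => (f z.val ⟨z, rfl⟩).2
  exact { hom := ⟨e, he⟩
          inv := ⟨e.symm, fun z => by rw [← he (e.symm z), Equiv.apply_symm_apply]⟩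
          hom_inv_id := Subtype.ext (Equiv.self_trans_symm e)
          inv_hom_id := Subtype.ext (Equiv.symm_trans_self e) }

/-- Replacing each subset in a sequence by the sequence of its singletons. -/
noncomputable def small {n : ℕ} (S : LObj n) : LObj n :=
  S.flatMap fun s => s.toList.map fun x => ({x} : Finset (Fin n))

lemma small_isSmall {n : ℕ} (S : LObj n) : IsSmallObj (small S) := by
  intro i
  obtain ⟨s, -, hmem⟩ := List.mem_flatMap.1 (List.get_mem (l := small S) _)
  obtain ⟨y, -, hy⟩ := List.mem_map.1 hmem
  exact (congrArg Finset.card hy).symm.le.trans (by simp)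

lemma countP_small {n : ℕ} (S : LObj n) (x : Fin n) :
    (small S).countP (fun s => decide (x ∈ s)) = S.countP (fun s => decide (x ∈ s)) := by
  induction S with
  | nil => rfl
  | cons s S ih =>
    have hmap : List.countP (fun t => decide (x ∈ t))
        (s.toList.map fun y => ({y} : Finset (Fin n))) = if x ∈ s then 1 else 0 := by
      rw [List.countP_map]
      have hc : List.countP ((fun t => decide (x ∈ t)) ∘ fun y => ({y} : Finset (Fin n)))
          s.toList = s.toList.count x := by
        apply List.countP_congr
        intro y _
        simp only [Function.comp, Finset.mem_singleton]
        constructor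
        · intro h; have hxy := of_decide_eq_true h; subst hxy; simp
        · intro h; have := eq_of_beq h; simp [this]
      rw [hc]
      by_cases hx : x ∈ s
      · rw [List.count_eq_one_of_mem (Finset.nodup_toList s) (by simpa using hx)]
        simp [hx]
      · rw [List.count_eq_zero_of_not_mem (by simpa using hx)]
        simp [hx]
    have ih' := ih
    simp only [small] at ih' ⊢
    rw [List.flatMap_cons, List.countP_append, List.countP_cons, hmap, ih']
    by_cases hx : x ∈ s <;> simp [hx] <;> omega

lemma card_fiber {n : ℕ} (S : LObj n) (x : Fin n) :
    Fintype.card {z : LTot S // z.val = x} = S.countP (fun s => decide (x ∈ s)) := by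
  rw [Fintype.card_congr (fiberEquivIdx S x)]
  exact card_subtype_get S (fun s => x ∈ s)

/-- For each `n`, the inclusion functor from the free permutative category on `n` copies of
`L(1)` (realized as the full subcategory of `L(n)` on sequences of singleton-or-empty
subsets) into `L(n)`, induced by the `n` projections `δⁿ_k : n⁺ → 1⁺`, is an equivalence of
categories which is injective on objects; in particular every object of `L(n)` is isomorphic
to one in its image. -/
theorem coproduct_inclusion_into_Ln_is_equivalence (n : ℕ) :
    (ObjectProperty.ι (@IsSmallObj n)).IsEquivalence ∧
    Function.Injective (ObjectProperty.ι (@IsSmallObj n)).obj ∧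
    ∀ S : LObj n, ∃ T : ObjectProperty.FullSubcategory (@IsSmallObj n),
      Nonempty ((ObjectProperty.ι (@IsSmallObj n)).obj T ≅ S) := by
  have ess : ∀ S : LObj n, ∃ T : ObjectProperty.FullSubcategory (@IsSmallObj n),
      Nonempty ((ObjectProperty.ι (@IsSmallObj n)).obj T ≅ S) := by
    intro S
    exact ⟨⟨small S, small_isSmall S⟩, ⟨isoOfCard (small S) S fun x => by
      rw [card_fiber, card_fiber, countP_small]⟩⟩
  refine ⟨?_, ?_, ess⟩
  · have : (ObjectProperty.ι (@IsSmallObj n)).EssSurj :=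
      ⟨fun S => by obtain ⟨T, hT⟩ := ess S; exact ⟨T, hT⟩⟩
    exact { }
  · intro T U h
    cases T; cases U; cases h; rfl
end
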